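/- Let x_1, ..., x_m be complex numbers with |x_1| ≥ ... ≥ |x_m| and suppose |x_k| > |x_{k+1}| (strict gap after position k). Then (1/s)·log|e_k(x_1^s, ..., x_m^s)| → ∑_{j=1}^k log|x_j| as s → ∞, provided x_1⋯x_k ≠ 0. -/

import Mathlib

set_option maxHeartbeats 1000000

open Filter Finset

lemma aux_filt_eq {m r : ℕ} (hrm : r ≤ m) :
    (Finset.univ.filter fun j : Fin m => (j : ℕ) < r)
      = Finset.univ.image (Fin.castLE hrm) := by
  ext j
  simp only [Finset.mem_filter, Finset.mem_univ, true_and, Finset.mem_image]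
  constructor
  · intro h; exact ⟨⟨j, h⟩, rfl⟩
  · rintro ⟨i, rfl⟩; exact i.2

lemma aux_filt_card {m r : ℕ} (hrm : r ≤ m) :
    (Finset.univ.filter fun j : Fin m => (j : ℕ) < r).card = r := by
  rw [aux_filt_eq hrm, Finset.card_image_of_injective _ (Fin.castLE_injective hrm)]
  simp

lemma aux_prod_le {m r : ℕ} (f : Fin m → ℝ) (hf : ∀ i, 0 ≤ f i)
    (hsort : ∀ i j : Fin m, i ≤ j → f j ≤ f i)
    (A : Finset (Fin m)) (hA : A.card = r) :
    ∏ j ∈ A, f j ≤ ∏ j ∈ Finset.univ.filter (fun j : Fin m => (j : ℕ) < r), f j := by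
  have hrm : r ≤ m := by
    have := A.card_le_univ
    simpa [hA] using this
  set e := A.orderEmbOfFin hA with he
  have hle : ∀ i : Fin r, ((i : ℕ) : ℕ) ≤ ((e i : Fin m) : ℕ) := by
    intro i
    obtain ⟨n, hn⟩ := i
    induction n with
    | zero => exact Nat.zero_le _
    | succ n ih =>
      have h' : n < r := by omega
      have h1 := ih h'
      have h2 : e ⟨n, h'⟩ < e ⟨n + 1, hn⟩ := e.strictMono (by simp [Fin.lt_def])
      rw [Fin.lt_def] at h2
      have e1 : ((⟨n, h'⟩ : Fin r) : ℕ) = n := rfl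
      have e2 : ((⟨n + 1, hn⟩ : Fin r) : ℕ) = n + 1 := rfl
      omega
  have hAimg : A = Finset.univ.image e := by
    ext j
    simp only [Finset.mem_image, Finset.mem_univ, true_and]
    constructor
    · intro hj
      have : j ∈ Set.range e := by rw [Finset.range_orderEmbOfFin]; exact hj
      obtain ⟨i, hi⟩ := this
      exact ⟨i, hi⟩
    · rintro ⟨i, rfl⟩
      exact Finset.orderEmbOfFin_mem A hA i
  rw [hAimg, aux_filt_eq hrm, Finset.prod_image (fun a _ b _ h => e.injective h),
    Finset.prod_image (fun a _ b _ h => Fin.castLE_injective hrm h)]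
  apply Finset.prod_le_prod (fun i _ => hf _)
  intro i _
  exact hsort (Fin.castLE hrm i) (e i) (by rw [Fin.le_def]; exact hle i)

/-- If `|x 0| ≥ ... ≥ |x (m-1)|` with a strict gap `|x (k-1)| > |x k|` and
`x 0 ⋯ x (k-1) ≠ 0`, then
`(1/s)·log|e_k(x^s)| → ∑_{j<k} log|x j|` as `s → ∞`. -/
theorem stmt18 (m k : ℕ) (hk1 : 1 ≤ k) (hkm : k < m) (x : Fin m → ℂ)
    (hsort : ∀ i j : Fin m, i ≤ j → Norm.norm (x j) ≤ Norm.norm (x i))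
    (hgap : Norm.norm (x ⟨k, hkm⟩) < Norm.norm (x ⟨k - 1, by omega⟩))
    (hnz : (∏ j ∈ Finset.univ.filter fun j : Fin m => (j : ℕ) < k, x j) ≠ 0) :
    Tendsto (fun s : ℕ => (s : ℝ)⁻¹ * Real.log (Norm.norm
        (∑ S ∈ Finset.powersetCard k (Finset.univ : Finset (Fin m)),
          ∏ j ∈ S, x j ^ s)))
      atTop
      (nhds (∑ j ∈ Finset.univ.filter fun j : Fin m => (j : ℕ) < k,
        Real.log (Norm.norm (x j)))) := by
  have hkm' : k ≤ m := le_of_lt hkm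
  set T : Finset (Fin m) := Finset.univ.filter fun j : Fin m => (j : ℕ) < k with hTdef
  have hTcard : T.card = k := aux_filt_card hkm'
  have hTmem : T ∈ Finset.powersetCard k (Finset.univ : Finset (Fin m)) := by
    rw [Finset.mem_powersetCard]
    exact ⟨Finset.subset_univ _, hTcard⟩
  set P : ℝ := ∏ j ∈ T, Norm.norm (x j) with hPdef
  have hxne : ∀ j ∈ T, x j ≠ 0 := fun j hj => by
    intro h
    exact hnz (Finset.prod_eq_zero hj h)
  have hP : 0 < P :=
    Finset.prod_pos fun j hj => (norm_pos_iff.mpr (hxne j hj))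
  have hxk1 : (0:ℝ) < Norm.norm (x ⟨k - 1, by omega⟩) :=
    lt_of_le_of_lt (norm_nonneg _) hgap
  set ρ : ℝ := Norm.norm (x ⟨k, hkm⟩) / Norm.norm (x ⟨k - 1, by omega⟩) with hρdef
  have hρ0 : 0 ≤ ρ := div_nonneg (norm_nonneg _) (le_of_lt hxk1)
  have hρ1 : ρ < 1 := (div_lt_one hxk1).mpr hgap
  -- split off the top element of T
  have hTsplit : T = insert ⟨k - 1, by omega⟩ (Finset.univ.filter
      fun j : Fin m => (j : ℕ) < k - 1) := by
    ext j
    simp only [hTdef, Finset.mem_filter, Finset.mem_univ, true_and, Finset.mem_insert]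
    constructor
    · intro h
      rcases Nat.lt_or_ge (j : ℕ) (k - 1) with h' | h'
      · exact Or.inr h'
      · left; apply Fin.ext; show (j:ℕ) = k - 1; omega
    · rintro (rfl | h)
      · show k - 1 < k; omega
      · omega
  set Q : ℝ := ∏ j ∈ Finset.univ.filter (fun j : Fin m => (j : ℕ) < k - 1),
    Norm.norm (x j) with hQdef
  have hPQ : P = Norm.norm (x ⟨k - 1, by omega⟩) * Q :=
    (Finset.prod_congr hTsplit fun _ _ => rfl).trans (Finset.prod_insert (by simp))
  have hPρ : P * ρ = Norm.norm (x ⟨k, hkm⟩) * Q := by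
    rw [hPQ, hρdef]
    field_simp
  -- key bound for off-diagonal subsets
  have hkey : ∀ S ∈ Finset.powersetCard k (Finset.univ : Finset (Fin m)), S ≠ T →
      ∏ j ∈ S, Norm.norm (x j) ≤ P * ρ := by
    intro S hS hST
    rw [Finset.mem_powersetCard] at hS
    obtain ⟨-, hScard⟩ := hS
    have hex : ∃ j ∈ S, j ∉ T := by
      by_contra h
      push_neg at h
      exact hST (Finset.eq_of_subset_of_card_le h (by rw [hScard, hTcard]))
    obtain ⟨j, hjS, hjT⟩ := hex
    have hjk : k ≤ (j : ℕ) := by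
      by_contra h
      exact hjT (by simp [hTdef]; omega)
    have h1 : ∏ j ∈ S, Norm.norm (x j)
        = Norm.norm (x j) * ∏ i ∈ S.erase j, Norm.norm (x i) :=
      (Finset.mul_prod_erase S _ hjS).symm
    have h2 : ∏ i ∈ S.erase j, Norm.norm (x i) ≤ Q := by
      rw [hQdef]
      exact aux_prod_le _ (fun i => norm_nonneg _) hsort _
        (by rw [Finset.card_erase_of_mem hjS, hScard])
    have h3 : Norm.norm (x j) ≤ Norm.norm (x ⟨k, hkm⟩) :=
      hsort ⟨k, hkm⟩ j (by rw [Fin.le_def]; exact hjk)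
    rw [h1, hPρ]
    exact mul_le_mul h3 h2 (Finset.prod_nonneg fun i _ => norm_nonneg _)
      (norm_nonneg _)
  set N : ℝ := ((Finset.powersetCard k (Finset.univ : Finset (Fin m))).card : ℝ) with hNdef
  have hN0 : 0 ≤ N := Nat.cast_nonneg _
  -- modulus of each term
  have hterm : ∀ (s : ℕ) (S : Finset (Fin m)),
      Norm.norm (∏ j ∈ S, x j ^ s) = (∏ j ∈ S, Norm.norm (x j)) ^ s := by
    intro s S
    rw [norm_prod, ← Finset.prod_pow]
    congr 1
    ext j
    rw [norm_pow]
  -- decomposition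
  set F : ℕ → ℂ := fun s => ∑ S ∈ Finset.powersetCard k (Finset.univ : Finset (Fin m)),
    ∏ j ∈ S, x j ^ s with hFdef
  set R : ℕ → ℂ := fun s => ∑ S ∈ (Finset.powersetCard k
      (Finset.univ : Finset (Fin m))).erase T, ∏ j ∈ S, x j ^ s with hRdef
  have hsplit : ∀ s : ℕ, F s = (∏ j ∈ T, x j ^ s) + R s := by
    intro s
    rw [hFdef, hRdef]
    exact (Finset.add_sum_erase _ _ hTmem).symm
  have hD : ∀ s : ℕ, Norm.norm (∏ j ∈ T, x j ^ s) = P ^ s := fun s => hterm s T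
  have hR : ∀ s : ℕ, Norm.norm (R s) ≤ N * (P * ρ) ^ s := by
    intro s
    calc Norm.norm (R s) ≤ ∑ S ∈ (Finset.powersetCard k
        (Finset.univ : Finset (Fin m))).erase T, Norm.norm (∏ j ∈ S, x j ^ s) := by
          exact norm_sum_le _ _
      _ ≤ ∑ S ∈ (Finset.powersetCard k (Finset.univ : Finset (Fin m))).erase T,
          (P * ρ) ^ s := by
          apply Finset.sum_le_sum
          intro S hS
          rw [hterm s S]
          apply pow_le_pow_left₀ (Finset.prod_nonneg fun i _ => norm_nonneg _)
          exact hkey S (Finset.mem_of_mem_erase hS) (Finset.ne_of_mem_erase hS)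
      _ ≤ N * (P * ρ) ^ s := by
          rw [Finset.sum_const, nsmul_eq_mul]
          apply mul_le_mul_of_nonneg_right _ (by positivity)
          rw [hNdef]
          exact_mod_cast Finset.card_le_card (Finset.erase_subset _ _)
  have hPρs : ∀ s : ℕ, (P * ρ) ^ s = P ^ s * ρ ^ s := fun s => mul_pow _ _ _
  -- lower and upper bounds on |F s|
  have hlow : ∀ s : ℕ, P ^ s * (1 - N * ρ ^ s) ≤ Norm.norm (F s) := by
    intro s
    have h1 : Norm.norm (∏ j ∈ T, x j ^ s) - Norm.norm (R s)
        ≤ Norm.norm (F s) := by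
      rw [hsplit s]
      have h2 := norm_sub_le (∏ j ∈ T, x j ^ s + R s) (R s)
      rw [add_sub_cancel_right] at h2
      linarith
    calc P ^ s * (1 - N * ρ ^ s) = P ^ s - N * (P ^ s * ρ ^ s) := by ring
      _ ≤ Norm.norm (∏ j ∈ T, x j ^ s) - Norm.norm (R s) := by
          rw [hD s]
          apply sub_le_sub_left
          rw [← hPρs]
          exact hR s
      _ ≤ Norm.norm (F s) := h1
  have hhigh : ∀ s : ℕ, Norm.norm (F s) ≤ P ^ s * (1 + N * ρ ^ s) := by
    intro s
    rw [hsplit s]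
    calc Norm.norm (∏ j ∈ T, x j ^ s + R s)
        ≤ Norm.norm (∏ j ∈ T, x j ^ s) + Norm.norm (R s) :=
          norm_add_le _ _
      _ ≤ P ^ s + N * (P * ρ) ^ s := add_le_add (le_of_eq (hD s)) (hR s)
      _ = P ^ s * (1 + N * ρ ^ s) := by rw [hPρs]; ring
  -- eventually N * ρ^s < 1/2
  have hρtend : Tendsto (fun s : ℕ => N * ρ ^ s) atTop (nhds 0) := by
    have := tendsto_pow_atTop_nhds_zero_of_lt_one hρ0 hρ1
    simpa using this.const_mul N
  have hev : ∀ᶠ s : ℕ in atTop, N * ρ ^ s < 1 / 2 := by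
    have := hρtend.eventually (gt_mem_nhds (by norm_num : (0:ℝ) < 1/2))
    exact this
  -- log of P
  have hlogP : ∑ j ∈ T, Real.log (Norm.norm (x j)) = Real.log P := by
    rw [hPdef, Real.log_prod]
    intro j hj
    exact (norm_pos_iff.mpr (hxne j hj)).ne'
  -- the normalized quantity
  set u : ℕ → ℝ := fun s => Norm.norm (F s) / P ^ s with hudef
  have hub : ∀ᶠ s : ℕ in atTop, 1 - N * ρ ^ s ≤ u s ∧ u s ≤ 1 + N * ρ ^ s := by
    filter_upwards with s
    have hPs : (0:ℝ) < P ^ s := pow_pos hP s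
    constructor
    · rw [hudef, le_div_iff₀ hPs]
      calc (1 - N * ρ ^ s) * P ^ s = P ^ s * (1 - N * ρ ^ s) := by ring
        _ ≤ Norm.norm (F s) := hlow s
    · rw [hudef, div_le_iff₀ hPs]
      calc Norm.norm (F s) ≤ P ^ s * (1 + N * ρ ^ s) := hhigh s
        _ = (1 + N * ρ ^ s) * P ^ s := by ring
  have hlogu : Tendsto (fun s => Real.log (u s)) atTop (nhds 0) := by
    have hlo : Tendsto (fun s : ℕ => Real.log (1 - N * ρ ^ s)) atTop (nhds 0) := by
      have h1 : Tendsto (fun s : ℕ => 1 - N * ρ ^ s) atTop (nhds 1) := by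
        have := hρtend.const_sub 1
        simpa using this
      have := (Real.continuousAt_log (by norm_num : (1:ℝ) ≠ 0)).tendsto.comp h1
      simpa [Function.comp_def] using this
    have hhi : Tendsto (fun s : ℕ => Real.log (1 + N * ρ ^ s)) atTop (nhds 0) := by
      have h1 : Tendsto (fun s : ℕ => 1 + N * ρ ^ s) atTop (nhds 1) := by
        have := hρtend.const_add 1
        simpa using this
      have := (Real.continuousAt_log (by norm_num : (1:ℝ) ≠ 0)).tendsto.comp h1
      simpa [Function.comp_def] using this
    apply tendsto_of_tendsto_of_tendsto_of_le_of_le' hlo hhi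
    · filter_upwards [hub, hev] with s hs hev'
      apply Real.log_le_log (by linarith [hs.1]) hs.1
    · filter_upwards [hub, hev] with s hs hev'
      have hu0 : 0 < u s := by linarith [hs.1]
      exact Real.log_le_log hu0 hs.2
  have hmain : Tendsto (fun s : ℕ => Real.log P + (s : ℝ)⁻¹ * Real.log (u s)) atTop
      (nhds (Real.log P + 0)) := by
    apply Tendsto.const_add
    have h1 : Tendsto (fun s : ℕ => (s : ℝ)⁻¹) atTop (nhds 0) :=
      tendsto_inv_atTop_zero.comp tendsto_natCast_atTop_atTop
    have := h1.mul hlogu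
    simpa using this
  rw [hTdef] at hlogP ⊢
  rw [hlogP]
  have : Real.log P = Real.log P + 0 := by ring
  rw [this]
  apply hmain.congr'
  filter_upwards [hev, eventually_ge_atTop 1] with s hs hs1
  have hPs : (0:ℝ) < P ^ s := pow_pos hP s
  have hF0 : 0 < Norm.norm (F s) := by
    calc (0:ℝ) < P ^ s * (1 - N * ρ ^ s) := by
          apply mul_pos hPs; linarith
      _ ≤ Norm.norm (F s) := hlow s
  have hu0 : 0 < u s := div_pos hF0 hPs
  have : Real.log (Norm.norm (F s)) = s * Real.log P + Real.log (u s) := by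
    have : Norm.norm (F s) = P ^ s * u s := by
      rw [hudef]; field_simp
    rw [this, Real.log_mul (ne_of_gt hPs) (ne_of_gt hu0), Real.log_pow]
  show Real.log P + (s : ℝ)⁻¹ * Real.log (u s)
      = (s : ℝ)⁻¹ * Real.log (Norm.norm (F s))
  rw [this]
  have hs0 : (s : ℝ) ≠ 0 := by positivity
  field_simp
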